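/- arXiv:2111.06620 — 2 statements merged into one kernel-verified Lean document; each statement's English description precedes it below -/
import Mathlib

section
/- Let A be a random finite subset of a countable set E with E[|A|] ≤ a for some a > 0, let (X_e)_{e∈E} be complex-valued random variables with |X_e| ≤ 1 for all e, and suppose there exists c ∈ [-1,1] and b > 0 such that |X_e - c| ≤ b for all e. Then E[ |∏_{e∈A} c - ∏_{e∈A} X_e| ] ≤ 2√(2ab). -/
open MeasureTheory

lemma prod_sub_prod_norm_le {E : Type*} (s : Finset E) (f g : E → ℂ)
    (hf : ∀ e, ‖f e‖ ≤ 1) (hg : ∀ e, ‖g e‖ ≤ 1) :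
    ‖(∏ e ∈ s, f e) - ∏ e ∈ s, g e‖ ≤ ∑ e ∈ s, ‖f e - g e‖ := by
  classical
  induction s using Finset.induction with
  | empty => simp
  | insert x s hx ih =>
    rw [Finset.prod_insert hx, Finset.prod_insert hx, Finset.sum_insert hx]
    have key : f x * ∏ e ∈ s, f e - g x * ∏ e ∈ s, g e
        = f x * ((∏ e ∈ s, f e) - ∏ e ∈ s, g e) + (f x - g x) * ∏ e ∈ s, g e := by
      ring
    rw [key]
    refine (norm_add_le _ _).trans ?_
    rw [norm_mul, norm_mul]
    have h1 : ‖f x‖ * ‖(∏ e ∈ s, f e) - ∏ e ∈ s, g e‖ ≤ ∑ e ∈ s, ‖f e - g e‖ := by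
      calc ‖f x‖ * ‖(∏ e ∈ s, f e) - ∏ e ∈ s, g e‖
          ≤ 1 * ‖(∏ e ∈ s, f e) - ∏ e ∈ s, g e‖ := by
            apply mul_le_mul_of_nonneg_right (hf x) (norm_nonneg _)
        _ = ‖(∏ e ∈ s, f e) - ∏ e ∈ s, g e‖ := one_mul _
        _ ≤ _ := ih
    have h2 : ‖f x - g x‖ * ‖∏ e ∈ s, g e‖ ≤ ‖f x - g x‖ := by
      have : ‖∏ e ∈ s, g e‖ ≤ 1 := by
        rw [norm_prod]
        calc ∏ e ∈ s, ‖g e‖ ≤ ∏ e ∈ s, 1 :=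
              Finset.prod_le_prod (fun e _ => norm_nonneg _) (fun e _ => hg e)
          _ = 1 := Finset.prod_const_one
      calc ‖f x - g x‖ * ‖∏ e ∈ s, g e‖ ≤ ‖f x - g x‖ * 1 :=
            mul_le_mul_of_nonneg_left this (norm_nonneg _)
        _ = _ := mul_one _
    linarith

/-- Let `A` be a random finite subset of a countable set `E` with `𝔼[|A|] ≤ a` for some
`a > 0`, let `(X_e)_{e ∈ E}` be complex-valued random variables with `|X_e| ≤ 1`, and
suppose there is `c ∈ [-1, 1]` and `b > 0` with `|X_e - c| ≤ b` for all `e`.  Then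
`𝔼[ |∏_{e ∈ A} c - ∏_{e ∈ A} X_e| ] ≤ 2√(2ab)`. -/
theorem stmt_1 {Ω E : Type*} [Countable E] [MeasurableSpace Ω]
    (μ : Measure Ω) [IsProbabilityMeasure μ]
    (A : Ω → Finset E) (X : E → Ω → ℂ)
    (a b c : ℝ) (ha : 0 < a) (hb : 0 < b)
    (hAint : Integrable (fun ω => ((A ω).card : ℝ)) μ)
    (hAa : ∫ ω, ((A ω).card : ℝ) ∂μ ≤ a)
    (hX1 : ∀ e ω, ‖X e ω‖ ≤ 1)
    (hc : c ∈ Set.Icc (-1 : ℝ) 1)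
    (hXc : ∀ e ω, ‖X e ω - (c : ℂ)‖ ≤ b) :
    ∫ ω, ‖(∏ _e ∈ A ω, (c : ℂ)) - ∏ e ∈ A ω, X e ω‖ ∂μ ≤
      2 * Real.sqrt (2 * a * b) := by
  have hs : (0:ℝ) < Real.sqrt (2 * a * b) := Real.sqrt_pos.mpr (by positivity)
  by_cases hint : Integrable (fun ω => ‖(∏ _e ∈ A ω, (c : ℂ)) - ∏ e ∈ A ω, X e ω‖) μ
  swap
  · rw [integral_undef hint]; positivity
  set t : ℝ := Real.sqrt (2 * a / b) with htdef
  have ht : 0 < t := Real.sqrt_pos.mpr (by positivity)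
  have ht2 : t ^ 2 = 2 * a / b := Real.sq_sqrt (by positivity)
  have hs2 : Real.sqrt (2 * a * b) ^ 2 = 2 * a * b := Real.sq_sqrt (by positivity)
  have hcnorm : ‖(c:ℂ)‖ ≤ 1 := by
    rw [Complex.norm_real, Real.norm_eq_abs, abs_le]
    exact ⟨hc.1, hc.2⟩
  -- pointwise bound
  have hpt : ∀ ω, ‖(∏ _e ∈ A ω, (c : ℂ)) - ∏ e ∈ A ω, X e ω‖
      ≤ 2 / t * ((A ω).card : ℝ) + t * b := by
    intro ω
    rcases le_or_gt t ((A ω).card : ℝ) with h | h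
    · -- use bound by 2
      have h2 : ‖(∏ _e ∈ A ω, (c : ℂ)) - ∏ e ∈ A ω, X e ω‖ ≤ 2 := by
        refine (norm_sub_le _ _).trans ?_
        have p1 : ‖∏ _e ∈ A ω, (c:ℂ)‖ ≤ 1 := by
          rw [norm_prod]
          calc ∏ _e ∈ A ω, ‖(c:ℂ)‖ ≤ ∏ _e ∈ A ω, 1 :=
                Finset.prod_le_prod (fun e _ => norm_nonneg _) (fun e _ => hcnorm)
            _ = 1 := Finset.prod_const_one
        have p2 : ‖∏ e ∈ A ω, X e ω‖ ≤ 1 := by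
          rw [norm_prod]
          calc ∏ e ∈ A ω, ‖X e ω‖ ≤ ∏ e ∈ A ω, 1 :=
                Finset.prod_le_prod (fun e _ => norm_nonneg _) (fun e _ => hX1 e ω)
            _ = 1 := Finset.prod_const_one
        linarith
      have : (2:ℝ) ≤ 2 / t * ((A ω).card : ℝ) := by
        rw [div_mul_eq_mul_div, le_div_iff₀ ht]
        nlinarith
      nlinarith [mul_pos ht hb]
    · -- use bound by card * b
      have h1 : ‖(∏ _e ∈ A ω, (c : ℂ)) - ∏ e ∈ A ω, X e ω‖
          ≤ ((A ω).card : ℝ) * b := by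
        calc ‖(∏ _e ∈ A ω, (c : ℂ)) - ∏ e ∈ A ω, X e ω‖
            ≤ ∑ e ∈ A ω, ‖(c:ℂ) - X e ω‖ :=
              prod_sub_prod_norm_le (A ω) _ _ (fun _ => hcnorm) (fun e => hX1 e ω)
          _ ≤ ∑ e ∈ A ω, b := by
              refine Finset.sum_le_sum fun e _ => ?_
              rw [norm_sub_rev]; exact hXc e ω
          _ = ((A ω).card : ℝ) * b := by rw [Finset.sum_const, nsmul_eq_mul]
      have : ((A ω).card : ℝ) * b ≤ t * b := by nlinarith
      have hnn : 0 ≤ 2 / t * ((A ω).card : ℝ) := by positivity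
      linarith
  -- integrate
  have hgint : Integrable (fun ω => 2 / t * ((A ω).card : ℝ) + t * b) μ :=
    (hAint.const_mul _).add (integrable_const _)
  have hI : ∫ ω, ‖(∏ _e ∈ A ω, (c : ℂ)) - ∏ e ∈ A ω, X e ω‖ ∂μ
      ≤ ∫ ω, (2 / t * ((A ω).card : ℝ) + t * b) ∂μ :=
    integral_mono hint hgint hpt
  have hI2 : ∫ ω, (2 / t * ((A ω).card : ℝ) + t * b) ∂μ
      = 2 / t * (∫ ω, ((A ω).card : ℝ) ∂μ) + t * b := by
    rw [integral_add (hAint.const_mul _) (integrable_const _),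
      integral_const_mul, integral_const]
    simp
  have hfin : 2 / t * (∫ ω, ((A ω).card : ℝ) ∂μ) + t * b ≤ 2 * Real.sqrt (2 * a * b) := by
    have h1 : 2 / t * (∫ ω, ((A ω).card : ℝ) ∂μ) ≤ 2 / t * a :=
      mul_le_mul_of_nonneg_left hAa (by positivity)
    have h2 : 2 / t * a + t * b = 2 * Real.sqrt (2 * a * b) := by
      have hq1 : (t * b) ^ 2 = 2 * a * b := by
        rw [mul_pow, ht2]; field_simp
      have htb : t * b = Real.sqrt (2 * a * b) := by
        rw [← hq1, Real.sqrt_sq (le_of_lt (mul_pos ht hb))]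
      have hq2 : (2 / t * a) ^ 2 = 2 * a * b := by
        rw [mul_pow, div_pow, ht2]; field_simp
      have hta : 2 / t * a = Real.sqrt (2 * a * b) := by
        rw [← hq2, Real.sqrt_sq (by positivity)]
      rw [htb, hta]; ring
    linarith
  linarith
end

section
/- Every non-trivial G-valued k-form ω with finite support on the cell complex of ℤ^m can be written as ω = ω₁ + ⋯ + ω_j where each ω_i is non-trivial and irreducible, each ω_i ≤ ω, the ω_i have pairwise disjoint supports, and the dω_i have pairwise disjoint supports. -/
/-- An oriented cell of the cell complex of `ℤ^m`: a base point, a set of spanning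
directions, and an orientation. -/
structure Cell (m : ℕ) where
  base : Fin m → ℤ
  dirs : Finset (Fin m)
  sign : Bool

namespace Cell

/-- The cell with the opposite orientation. -/
def neg {m : ℕ} (c : Cell m) : Cell m := ⟨c.base, c.dirs, !c.sign⟩

/-- The dimension of a cell. -/
def dim {m : ℕ} (c : Cell m) : ℕ := c.dirs.card

/-- The cell lies in the box `B_N = [-N,N]^m`. -/
def inBox {m : ℕ} (N : ℕ) (c : Cell m) : Prop :=
  ∀ j, -(N : ℤ) ≤ c.base j ∧ c.base j + (if j ∈ c.dirs then 1 else 0) ≤ (N : ℤ)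

/-- The cell is a boundary cell of the box `B_N`. -/
def isBoundaryCell {m : ℕ} (N : ℕ) (c : Cell m) : Prop :=
  c.inBox N ∧ ∃ j, j ∉ c.dirs ∧ (c.base j = (N : ℤ) ∨ c.base j = -(N : ℤ))

end Cell

/-- The sign `±1` of an orientation. -/
def sgnz (b : Bool) : ℤ := if b then 1 else -1

theorem sgnz_not (b : Bool) : sgnz (!b) = -sgnz b := by cases b <;> simp [sgnz]

/-- Translation of a base point by a unit vector. -/
def shiftBase {m : ℕ} (a : Fin m → ℤ) (i : Fin m) : Fin m → ℤ :=
  fun j => a j + if j = i then 1 else 0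

/-- The coefficient of the oriented cell `f` in the boundary chain `∂c` of the oriented
cell `c`. -/
def bdryCoeff {m : ℕ} (c f : Cell m) : ℤ :=
  sgnz c.sign * sgnz f.sign *
    ∑ i ∈ c.dirs,
      (-1 : ℤ) ^ ((c.dirs.filter (fun j => j < i)).card) *
        ((if f.base = shiftBase c.base i ∧ f.dirs = c.dirs.erase i then 1 else 0) -
          (if f.base = c.base ∧ f.dirs = c.dirs.erase i then 1 else 0))

/-- The support of the coboundary `∂̂e` of a cell `e`: the set of cells having `e` in
their boundary with nonzero coefficient. -/
def cobSupp {m : ℕ} (e : Cell m) : Set (Cell m) := {p | bdryCoeff p e ≠ 0}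

/-- A `G`-valued `k`-form on the cell complex of `ℤ^m`: a `G`-valued function on oriented
cells, odd under orientation reversal and supported on cells of dimension `k`. -/
structure Form (m k : ℕ) (G : Type*) [AddCommGroup G] where
  val : Cell m → G
  odd : ∀ c, val c.neg = -val c
  graded : ∀ c, c.dim ≠ k → val c = 0

namespace Form

variable {m k : ℕ} {G : Type*} [AddCommGroup G]

/-- The discrete exterior derivative: `dω(c) = ω(∂c)`. -/
def d (ω : Form m k G) : Form m (k + 1) G where
  val c :=
    if c.dim = k + 1 then
      sgnz c.sign •
        ∑ i ∈ c.dirs,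
          (-1 : ℤ) ^ ((c.dirs.filter (fun j => j < i)).card) •
            (ω.val ⟨shiftBase c.base i, c.dirs.erase i, true⟩ -
              ω.val ⟨c.base, c.dirs.erase i, true⟩)
    else 0
  odd c := by
    simp only [Cell.neg, Cell.dim]
    by_cases h : c.dirs.card = k + 1
    · simp only [h, ↓reduceIte, sgnz_not, neg_zsmul]
    · simp only [h, ↓reduceIte, neg_zero]
  graded c h := if_neg h

/-- The support of a form. -/
def supp (ω : Form m k G) : Set (Cell m) := {c | ω.val c ≠ 0}

/-- The partial order on forms: `ω' ≤ ω` iff `ω' = ω|_{supp ω'}` and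
`dω' = (dω)|_{supp dω'}`. -/
def le (ω' ω : Form m k G) : Prop :=
  (∀ c, ω'.val c ≠ 0 → ω.val c = ω'.val c) ∧
  (∀ c, ω'.d.val c ≠ 0 → ω.d.val c = ω'.d.val c)

/-- Pointwise difference of forms. -/
def sub (ω ω' : Form m k G) : Form m k G where
  val c := ω.val c - ω'.val c
  odd c := by
    show ω.val c.neg - ω'.val c.neg = -(ω.val c - ω'.val c)
    rw [ω.odd, ω'.odd]; abel
  graded c h := by
    show ω.val c - ω'.val c = 0
    rw [ω.graded c h, ω'.graded c h, sub_zero]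

/-- A form is non-trivial if it is nonzero on some cell. -/
def Nontriv (ω : Form m k G) : Prop := ∃ c, ω.val c ≠ 0

/-- A form is irreducible if there is no non-trivial form strictly below it. -/
def IsIrreducible (ω : Form m k G) : Prop :=
  ¬∃ ω' : Form m k G, ω'.Nontriv ∧ ω'.le ω ∧ ω' ≠ ω

theorem ext' {ω ω' : Form m k G} (h : ∀ c, ω.val c = ω'.val c) : ω = ω' := by
  cases ω; cases ω'
  simp only [Form.mk.injEq]
  exact funext h

theorem d_sub_val (ω ω' : Form m k G) (c : Cell m) :
    (ω.sub ω').d.val c = ω.d.val c - ω'.d.val c := by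
  simp only [d, sub]
  split_ifs with h
  · rw [← smul_sub, ← Finset.sum_sub_distrib]
    congr 1
    refine Finset.sum_congr rfl fun i _ => ?_
    rw [← smul_sub]
    congr 1
    abel
  · simp

theorem le_refl' (ω : Form m k G) : ω.le ω := ⟨fun _ _ => rfl, fun _ _ => rfl⟩

theorem le_trans' {a b c : Form m k G} (h1 : a.le b) (h2 : b.le c) : a.le c := by
  constructor
  · intro x hx
    rw [h2.1 x (by rw [h1.1 x hx]; exact hx), h1.1 x hx]
  · intro x hx
    rw [h2.2 x (by rw [h1.2 x hx]; exact hx), h1.2 x hx]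

theorem supp_subset_of_le {a b : Form m k G} (h : a.le b) : a.supp ⊆ b.supp := by
  intro c hc
  simp only [supp, Set.mem_setOf_eq] at *
  rw [h.1 c hc]; exact hc

theorem dsupp_subset_of_le {a b : Form m k G} (h : a.le b) : a.d.supp ⊆ b.d.supp := by
  intro c hc
  simp only [supp, Set.mem_setOf_eq] at *
  rw [h.2 c hc]; exact hc

end Form

theorem stmt_11_aux {m k : ℕ} {G : Type*} [AddCommGroup G] :
    ∀ (n : ℕ) (ω : Form m k G) (_ : ω.Nontriv) (hfin : ω.supp.Finite),
    hfin.toFinset.card ≤ n →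
    ∃ (j : ℕ) (f : Fin j → Form m k G), 1 ≤ j ∧
      (∀ i, (f i).Nontriv ∧ (f i).IsIrreducible) ∧
      (∀ i, (f i).le ω) ∧
      (∀ i i', i ≠ i' → (f i).supp ∩ (f i').supp = ∅) ∧
      (∀ c, ω.val c = ∑ i, (f i).val c) ∧
      (∀ i i', i ≠ i' → (f i).d.supp ∩ (f i').d.supp = ∅) := by
  intro n
  induction n with
  | zero =>
    intro ω hnt hfin hcard
    obtain ⟨c, hc⟩ := hnt
    exfalso
    have : c ∈ hfin.toFinset := by simpa [Form.supp] using hc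
    have := Finset.card_pos.mpr ⟨c, this⟩
    omega
  | succ n ih =>
    intro ω hnt hfin hcard
    by_cases hirr : ω.IsIrreducible
    · refine ⟨1, fun _ => ω, le_rfl, fun _ => ⟨hnt, hirr⟩, fun _ => Form.le_refl' ω,
        fun i i' h => absurd (Subsingleton.elim i i') h, fun c => by simp, 
        fun i i' h => absurd (Subsingleton.elim i i') h⟩
    · simp only [Form.IsIrreducible, not_not] at hirr
      obtain ⟨ω', hnt', hle', hne'⟩ := hirr
      set ω'' := ω.sub ω' with hω''
      -- supports of ω' and ω'' are disjoint
      have hdisj : ∀ c, ω'.val c ≠ 0 → ω''.val c = 0 := by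
        intro c hc
        show ω.val c - ω'.val c = 0
        rw [hle'.1 c hc, sub_self]
      have hddisj : ∀ c, ω'.d.val c ≠ 0 → ω''.d.val c = 0 := by
        intro c hc
        rw [Form.d_sub_val, hle'.2 c hc, sub_self]
      -- ω'' ≤ ω
      have hle'' : ω''.le ω := by
        constructor
        · intro c hc
          by_cases h' : ω'.val c = 0
          · show ω.val c = ω.val c - ω'.val c
            rw [h', sub_zero]
          · exact absurd (hdisj c h') hc
        · intro c hc
          by_cases h' : ω'.d.val c = 0
          · rw [Form.d_sub_val, h', sub_zero]
          · exact absurd (hddisj c h') hc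
      -- ω'' is nontrivial
      have hnt'' : ω''.Nontriv := by
        by_contra h
        simp only [Form.Nontriv, not_exists, not_not] at h
        exact hne' (Form.ext' fun c => (sub_eq_zero.mp (h c)).symm)
      have hsub' : ω'.supp ⊆ ω.supp := Form.supp_subset_of_le hle'
      have hsub'' : ω''.supp ⊆ ω.supp := Form.supp_subset_of_le hle''
      have hfin' := hfin.subset hsub'
      have hfin'' := hfin.subset hsub''
      obtain ⟨c'', hc''⟩ := hnt''
      obtain ⟨c', hc'⟩ := hnt'
      have hcard' : hfin'.toFinset.card ≤ n := by
        have hss : hfin'.toFinset ⊂ hfin.toFinset := by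
          rw [Set.Finite.toFinset_ssubset_toFinset]
          refine ⟨hsub', fun hall => ?_⟩
          have hmem : c'' ∈ ω'.supp := hall (hsub'' hc'')
          exact hc'' (hdisj c'' hmem)
        have := Finset.card_lt_card hss
        omega
      have hcard'' : hfin''.toFinset.card ≤ n := by
        have hss : hfin''.toFinset ⊂ hfin.toFinset := by
          rw [Set.Finite.toFinset_ssubset_toFinset]
          refine ⟨hsub'', fun hall => ?_⟩
          have hmem : c' ∈ ω''.supp := hall (hsub' hc')
          exact hmem (hdisj c' hc')
        have := Finset.card_lt_card hss
        omega
      obtain ⟨j₁, f₁, hj₁, hprop₁, hle₁, hdisj₁, hsum₁, hddisj₁⟩ :=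
        ih ω' ⟨c', hc'⟩ hfin' hcard'
      obtain ⟨j₂, f₂, hj₂, hprop₂, hle₂, hdisj₂, hsum₂, hddisj₂⟩ :=
        ih ω'' ⟨c'', hc''⟩ hfin'' hcard''
      set F : Fin (j₁ + j₂) → Form m k G := Fin.append f₁ f₂ with hF
      have hL : ∀ p, F (Fin.castAdd j₂ p) = f₁ p := fun p => Fin.append_left _ _ p
      have hR : ∀ p, F (Fin.natAdd j₁ p) = f₂ p := fun p => Fin.append_right _ _ p
      have hSdisj : ω'.supp ∩ ω''.supp = ∅ := by
        apply Set.eq_empty_iff_forall_notMem.mpr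
        intro x hx
        exact hx.2 (hdisj x hx.1)
      have hDdisj : ω'.d.supp ∩ ω''.d.supp = ∅ := by
        apply Set.eq_empty_iff_forall_notMem.mpr
        intro x hx
        exact hx.2 (hddisj x hx.1)
      have key : ∀ (A : Form m k G → Set (Cell m)) (S₁ S₂ : Set (Cell m)),
          (∀ p q, p ≠ q → A (f₁ p) ∩ A (f₁ q) = ∅) →
          (∀ p q, p ≠ q → A (f₂ p) ∩ A (f₂ q) = ∅) →
          (∀ p, A (f₁ p) ⊆ S₁) → (∀ p, A (f₂ p) ⊆ S₂) → S₁ ∩ S₂ = ∅ →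
          ∀ i i', i ≠ i' → A (F i) ∩ A (F i') = ∅ := by
        intro A S₁ S₂ h₁ h₂ hA1 hA2 hS i i'
        have cross : ∀ p q, A (f₁ p) ∩ A (f₂ q) = ∅ := by
          intro p q
          apply Set.eq_empty_iff_forall_notMem.mpr
          intro x hx
          have : x ∈ S₁ ∩ S₂ := ⟨hA1 p hx.1, hA2 q hx.2⟩
          rw [hS] at this
          exact this
        induction i using Fin.addCases with
        | left p =>
          induction i' using Fin.addCases with
          | left q =>
            intro hne
            rw [hL, hL]
            exact h₁ p q (fun h => hne (congrArg _ h))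
          | right q =>
            intro _
            rw [hL, hR]
            exact cross p q
        | right p =>
          induction i' using Fin.addCases with
          | left q =>
            intro _
            rw [hR, hL, Set.inter_comm]
            exact cross q p
          | right q =>
            intro hne
            rw [hR, hR]
            exact h₂ p q (fun h => hne (congrArg _ h))
      refine ⟨j₁ + j₂, F, by omega, ?_, ?_, ?_, ?_, ?_⟩
      · intro i
        induction i using Fin.addCases with
        | left p => rw [hL]; exact hprop₁ p
        | right p => rw [hR]; exact hprop₂ p
      · intro i
        induction i using Fin.addCases with
        | left p => rw [hL]; exact Form.le_trans' (hle₁ p) hle'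
        | right p => rw [hR]; exact Form.le_trans' (hle₂ p) hle''
      · exact key Form.supp ω'.supp ω''.supp hdisj₁ hdisj₂
          (fun p => Form.supp_subset_of_le (hle₁ p))
          (fun p => Form.supp_subset_of_le (hle₂ p)) hSdisj
      · intro c
        rw [Fin.sum_univ_add]
        have hsplit : ω.val c = ω'.val c + ω''.val c := by
          show _ = _ + (ω.val c - ω'.val c)
          abel
        rw [hsplit, hsum₁ c, hsum₂ c]
        congr 1
        · exact Finset.sum_congr rfl fun p _ => by rw [hL]
        · exact Finset.sum_congr rfl fun p _ => by rw [hR]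
      · exact key (fun x => x.d.supp) ω'.d.supp ω''.d.supp hddisj₁ hddisj₂
          (fun p => Form.dsupp_subset_of_le (hle₁ p))
          (fun p => Form.dsupp_subset_of_le (hle₂ p)) hDdisj

/-- Every non-trivial `G`-valued `k`-form `ω` with finite support on the cell complex of
`ℤ^m` can be written as `ω = ω₁ + ⋯ + ω_j` where each `ω_i` is non-trivial and
irreducible, each `ω_i ≤ ω`, the `ω_i` have pairwise disjoint supports, and the `dω_i`
have pairwise disjoint supports. -/
theorem stmt_11 {m k : ℕ} {G : Type*} [AddCommGroup G]
    (ω : Form m k G) (hnt : ω.Nontriv) (hfin : ω.supp.Finite) :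
    ∃ (j : ℕ) (f : Fin j → Form m k G), 1 ≤ j ∧
      (∀ i, (f i).Nontriv ∧ (f i).IsIrreducible) ∧
      (∀ i, (f i).le ω) ∧
      (∀ i i', i ≠ i' → (f i).supp ∩ (f i').supp = ∅) ∧
      (∀ c, ω.val c = ∑ i, (f i).val c) ∧
      (∀ i i', i ≠ i' → (f i).d.supp ∩ (f i').d.supp = ∅) := by
  exact stmt_11_aux hfin.toFinset.card ω hnt hfin le_rfl
end
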